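/- arXiv:2411.06967 — 3 statements merged into one kernel-verified Lean document; each statement's English description precedes it below -/
import Mathlib

section
/- Let P₀ be the orthogonal projection onto the ground-state eigenspace of a self-adjoint operator H on a finite-dimensional complex Hilbert space, let E₀ be the smallest eigenvalue of H and E₁ the second-smallest eigenvalue (assume H has at least two distinct eigenvalues), and set g = E₁ − E₀. Suppose moreover that P₀ has rank one, and define the state ω₀(A) := tr(P₀ A). Then for every operator A one has ω₀(A* (H A − A H)) ≥ g · (ω₀(A* A) − |ω₀(A)|²). -/
open Matrix
open scoped ComplexConjugate

namespace GappedAux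
variable {n : ℕ}

lemma conj_dot (v w : Fin n → ℂ) : conj (star v ⬝ᵥ w) = star w ⬝ᵥ v := by
  simp [dotProduct, map_sum, mul_comm]

lemma spectral_ineq (H : Matrix (Fin n) (Fin n) ℂ) (hH : H.IsHermitian)
    (E₀ E₁ : ℝ) (ψ : Fin n → ℂ) (hψ1 : star ψ ⬝ᵥ ψ = 1)
    (hspan : ∀ v : Fin n → ℂ, H *ᵥ v = (E₀ : ℂ) • v → ∃ c : ℂ, v = c • ψ)
    (hE0min : ∀ (v : Fin n → ℂ) (μ : ℂ), v ≠ 0 → H.mulVec v = μ • v →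
      μ = (E₀ : ℂ) ∨ (μ.im = 0 ∧ E₁ ≤ μ.re))
    (hlt : E₀ < E₁) (φ : Fin n → ℂ) :
    (E₁ - E₀) * ((star φ ⬝ᵥ φ).re - ‖star ψ ⬝ᵥ φ‖ ^ 2)
      ≤ (star φ ⬝ᵥ (H *ᵥ φ)).re - E₀ * (star φ ⬝ᵥ φ).re := by
  classical
  set b := hH.eigenvectorBasis with hb
  set μ : Fin n → ℝ := hH.eigenvalues with hμ
  set u : Fin n → Fin n → ℂ := fun i => ⇑(b i) with hu
  have hHu : ∀ i, H *ᵥ u i = (μ i : ℂ) • u i := by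
    intro i
    have h := hH.mulVec_eigenvectorBasis i
    funext j
    rw [congrFun h j]
    simp only [Pi.smul_apply, Complex.real_smul, smul_eq_mul]
    rfl
  have horth : ∀ i j, star (u i) ⬝ᵥ u j = if i = j then 1 else 0 := by
    intro i j
    have := (orthonormal_iff_ite (𝕜 := ℂ)).mp b.orthonormal i j
    rwa [EuclideanSpace.inner_eq_star_dotProduct, dotProduct_comm] at this
  set c : Fin n → ℂ := fun i => star (u i) ⬝ᵥ φ with hc
  have hexp : φ = ∑ i, c i • u i := by
    have h := b.sum_repr ((WithLp.equiv 2 _).symm φ)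
    have h2 : ∀ i, b.repr ((WithLp.equiv 2 _).symm φ) i = c i := by
      intro i
      rw [b.repr_apply_apply]
      rw [EuclideanSpace.inner_eq_star_dotProduct, dotProduct_comm]; rfl
    calc φ = ⇑((WithLp.equiv 2 (Fin n → ℂ)).symm φ) := rfl
    _ = ⇑(∑ i, b.repr ((WithLp.equiv 2 _).symm φ) i • b i) := by rw [h]
    _ = ∑ i, c i • u i := by
        simp only [h2]
        simp only [WithLp.ofLp_sum, WithLp.ofLp_smul]; rfl
  have hdot_u : ∀ i, star φ ⬝ᵥ u i = conj (c i) := fun i => (conj_dot (u i) φ).symm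
  set d : ℂ := star ψ ⬝ᵥ φ with hd
  set N : Fin n → ℝ := fun i => Complex.normSq (c i) with hN
  have hsum_smul : ∀ w : Fin n → Fin n → ℂ,
      star φ ⬝ᵥ (∑ i, c i • w i) = ∑ i, c i * (star φ ⬝ᵥ w i) := by
    intro w
    simp only [dotProduct, Finset.sum_apply, Pi.smul_apply, smul_eq_mul,
      Finset.mul_sum]
    rw [Finset.sum_comm]
    exact Finset.sum_congr rfl fun i _ => Finset.sum_congr rfl fun j _ => by ring
  have hφφ : (star φ ⬝ᵥ φ).re = ∑ i, N i := by
    have : star φ ⬝ᵥ φ = ∑ i, c i * conj (c i) := by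
      nth_rewrite 2 [hexp]
      rw [hsum_smul]
      exact Finset.sum_congr rfl fun i _ => by rw [hdot_u]
    rw [this, Complex.re_sum]
    exact Finset.sum_congr rfl fun i _ => by
      rw [Complex.mul_conj]; simp [N]
  have hHφ : (star φ ⬝ᵥ (H *ᵥ φ)).re = ∑ i, μ i * N i := by
    have h1 : H *ᵥ φ = ∑ i, c i • ((μ i : ℂ) • u i) := by
      conv_lhs => rw [hexp]
      rw [show H *ᵥ (∑ i, c i • u i) = H.mulVecLin (∑ i, c i • u i) from rfl, map_sum]
      exact Finset.sum_congr rfl fun i _ => by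
        rw [_root_.map_smul, Matrix.mulVecLin_apply, hHu i]
    have : star φ ⬝ᵥ (H *ᵥ φ) = ∑ i, c i * ((μ i : ℂ) * conj (c i)) := by
      rw [h1, hsum_smul]
      exact Finset.sum_congr rfl fun i _ => by
        rw [dotProduct_smul, smul_eq_mul, hdot_u]
    rw [this, Complex.re_sum]
    refine Finset.sum_congr rfl fun i _ => ?_
    have e : c i * ((μ i : ℂ) * conj (c i)) = ((μ i * N i : ℝ) : ℂ) := by
      rw [mul_left_comm, Complex.mul_conj, ← Complex.ofReal_mul]
    rw [e, Complex.ofReal_re]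
  have hnd : ‖d‖ ^ 2 = Complex.normSq d := by
    rw [Complex.sq_norm]
  have hune : ∀ i, u i ≠ 0 := by
    intro i h
    have h2 := horth i i
    rw [h] at h2
    simp at h2
  have hclass : ∀ i, μ i = E₀ ∨ E₁ ≤ μ i := by
    intro i
    rcases hE0min (u i) ((μ i : ℂ)) (hune i) (hHu i) with h | h
    · left; exact_mod_cast h
    · right; exact h.2
  set S : Finset (Fin n) := Finset.univ.filter (fun i => μ i = E₀) with hS
  have hSmem : ∀ i, i ∈ S ↔ μ i = E₀ := by
    intro i; simp [hS]
  -- for i ∈ S, u i = a • ψ with normSq a = 1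
  have hSvec : ∀ i ∈ S, ∃ a : ℂ, u i = a • ψ ∧ a ≠ 0 ∧ N i = Complex.normSq d := by
    intro i hi
    have hie : μ i = E₀ := (hSmem i).mp hi
    obtain ⟨a, ha⟩ := hspan (u i) (by rw [hHu i, hie])
    have hnorm : star (u i) ⬝ᵥ u i = 1 := by rw [horth i i]; simp
    have ha1 : conj a * a = 1 := by
      rw [ha] at hnorm
      have : star (a • ψ) ⬝ᵥ (a • ψ) = conj a * a * (star ψ ⬝ᵥ ψ) := by
        simp only [dotProduct, Pi.smul_apply, Pi.star_apply, smul_eq_mul,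
          star_mul', Finset.mul_sum]
        exact Finset.sum_congr rfl fun j _ => by
          simp only [RCLike.star_def]; ring
      rw [this, hψ1, mul_one] at hnorm
      exact hnorm
    have hane : a ≠ 0 := by
      intro h0; rw [h0] at ha1; simp at ha1
    refine ⟨a, ha, hane, ?_⟩
    have hci : c i = conj a * d := by
      rw [hc]
      simp only
      rw [ha, hd]
      simp only [dotProduct, Pi.smul_apply, Pi.star_apply, smul_eq_mul,
        star_mul', Finset.mul_sum]
      exact Finset.sum_congr rfl fun j _ => by
        simp only [RCLike.star_def]; ring
    have hna : Complex.normSq a = 1 := by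
      have := congrArg Complex.re ha1
      simpa [Complex.mul_conj', Complex.normSq_conj, Complex.normSq_apply] using this
    rw [hN]
    simp only
    rw [hci, Complex.normSq_mul, Complex.normSq_conj, hna, one_mul]
  have hScard : S.card ≤ 1 := by
    refine Finset.card_le_one.mpr ?_
    intro i hi j hj
    by_contra hij
    obtain ⟨a, ha, hane, -⟩ := hSvec i hi
    obtain ⟨a', ha', hane', -⟩ := hSvec j hj
    have h0 : star (u i) ⬝ᵥ u j = 0 := by rw [horth i j]; simp [hij]
    have : star (u i) ⬝ᵥ u j = conj a * a' * (star ψ ⬝ᵥ ψ) := by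
      rw [ha, ha']
      simp only [dotProduct, Pi.smul_apply, Pi.star_apply, smul_eq_mul,
        star_mul', Finset.mul_sum]
      exact Finset.sum_congr rfl fun k _ => by
        simp only [RCLike.star_def]; ring
    rw [this, hψ1, mul_one] at h0
    rcases mul_eq_zero.mp h0 with h | h
    · exact hane (by simpa using h)
    · exact hane' h
  have hsumS : ∑ i ∈ S, N i ≤ Complex.normSq d := by
    calc ∑ i ∈ S, N i = ∑ i ∈ S, Complex.normSq d := by
          refine Finset.sum_congr rfl fun i hi => ?_
          obtain ⟨a, -, -, h⟩ := hSvec i hi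
          exact h
    _ = S.card * Complex.normSq d := by rw [Finset.sum_const, nsmul_eq_mul]
    _ ≤ 1 * Complex.normSq d := by
        apply mul_le_mul_of_nonneg_right _ (Complex.normSq_nonneg d)
        exact_mod_cast hScard
    _ = Complex.normSq d := one_mul _
  have hNnn : ∀ i, 0 ≤ N i := fun i => Complex.normSq_nonneg _
  have hg : 0 ≤ E₁ - E₀ := by linarith
  have hsplit : ∑ i ∈ Sᶜ, N i + ∑ i ∈ S, N i = ∑ i, N i := Finset.sum_compl_add_sum S N
  have hsplit2 : ∑ i ∈ Sᶜ, (μ i - E₀) * N i + ∑ i ∈ S, (μ i - E₀) * N i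
      = ∑ i, (μ i - E₀) * N i := Finset.sum_compl_add_sum S _
  have hSzero : ∑ i ∈ S, (μ i - E₀) * N i = 0 := by
    refine Finset.sum_eq_zero fun i hi => ?_
    rw [(hSmem i).mp hi]
    ring
  rw [hφφ, hHφ, hnd]
  have key : (E₁ - E₀) * (∑ i, N i - Complex.normSq d) ≤ ∑ i, (μ i - E₀) * N i := by
    calc (E₁ - E₀) * (∑ i, N i - Complex.normSq d)
        ≤ (E₁ - E₀) * (∑ i, N i - ∑ i ∈ S, N i) := by
          apply mul_le_mul_of_nonneg_left _ hg
          linarith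
      _ = ∑ i ∈ Sᶜ, (E₁ - E₀) * N i := by
          rw [← hsplit]
          simp only [add_sub_cancel_right]
          rw [Finset.mul_sum]
      _ ≤ ∑ i ∈ Sᶜ, (μ i - E₀) * N i := by
          refine Finset.sum_le_sum fun i hi => ?_
          have : ¬ μ i = E₀ := by simpa [hS] using hi
          have hE1 : E₁ ≤ μ i := (hclass i).resolve_left this
          apply mul_le_mul_of_nonneg_right _ (hNnn i)
          linarith
      _ ≤ ∑ i, (μ i - E₀) * N i := by
          rw [← hsplit2, hSzero, add_zero]
  calc (E₁ - E₀) * (∑ i, N i - Complex.normSq d) ≤ ∑ i, (μ i - E₀) * N i := key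
    _ = ∑ i, μ i * N i - E₀ * ∑ i, N i := by
        rw [Finset.mul_sum, ← Finset.sum_sub_distrib]
        exact Finset.sum_congr rfl fun i _ => by ring

lemma dot_smul_smul (a bb : ℂ) (v w : Fin n → ℂ) :
    star (a • v) ⬝ᵥ (bb • w) = conj a * bb * (star v ⬝ᵥ w) := by
  simp only [dotProduct, Pi.smul_apply, Pi.star_apply, smul_eq_mul, star_mul',
    Finset.mul_sum]
  exact Finset.sum_congr rfl fun j _ => by simp only [RCLike.star_def]; ring

end GappedAux

/-- Finite-dimensional gapped ground state inequality:
`ω₀(A*[H,A]) ≥ g (ω₀(A*A) − |ω₀(A)|²)` where `ω₀(A) = tr(P₀ A)`,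
`P₀` is the rank-one spectral projection of the self-adjoint `H` onto its
lowest eigenvalue `E₀`, and `g = E₁ − E₀` with `E₁` the second-smallest
eigenvalue of `H`. -/
theorem stmt0 {n : ℕ} (H P₀ : Matrix (Fin n) (Fin n) ℂ)
    (hH : H.IsHermitian)
    (E₀ E₁ : ℝ)
    (hPproj : P₀ * P₀ = P₀) (hPherm : P₀.IsHermitian)
    (hPrange : ∀ v : Fin n → ℂ, P₀.mulVec v = v ↔ H.mulVec v = (E₀ : ℂ) • v)
    (hrank : P₀.rank = 1)
    (hE0min : ∀ (v : Fin n → ℂ) (μ : ℂ), v ≠ 0 → H.mulVec v = μ • v →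
      μ = (E₀ : ℂ) ∨ (μ.im = 0 ∧ E₁ ≤ μ.re))
    (hE1ev : ∃ v : Fin n → ℂ, v ≠ 0 ∧ H.mulVec v = (E₁ : ℂ) • v)
    (hlt : E₀ < E₁)
    (A : Matrix (Fin n) (Fin n) ℂ) :
    (E₁ - E₀) * (((P₀ * (Aᴴ * A)).trace).re - ‖(P₀ * A).trace‖ ^ 2)
      ≤ ((P₀ * (Aᴴ * (H * A - A * H))).trace).re := by
  classical
  rw [Matrix.rank] at hrank
  obtain ⟨v₀, hv₀ne, hv₀span⟩ := finrank_eq_one_iff'.mp hrank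
  set ψ₀ : Fin n → ℂ := (v₀ : Fin n → ℂ) with hψ₀
  have hψ₀ne : ψ₀ ≠ 0 := fun h => hv₀ne (Subtype.ext h)
  have hPψ₀ : P₀ *ᵥ ψ₀ = ψ₀ := by
    obtain ⟨w, hw⟩ := v₀.2
    rw [Matrix.mulVecLin_apply] at hw
    have h2 : P₀ *ᵥ (P₀ *ᵥ w) = P₀ *ᵥ w := by
      rw [Matrix.mulVec_mulVec, hPproj]
    rw [show ψ₀ = P₀ *ᵥ w from hw.symm]
    exact h2
  have hspan₀ : ∀ x : Fin n → ℂ, ∃ cc : ℂ, P₀ *ᵥ x = cc • ψ₀ := by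
    intro x
    obtain ⟨cc, hcc⟩ := hv₀span ⟨P₀ *ᵥ x, ⟨x, Matrix.mulVecLin_apply _ _⟩⟩
    refine ⟨cc, ?_⟩
    have := congrArg Subtype.val hcc
    simpa using this.symm
  set s : ℝ := ∑ i, Complex.normSq (ψ₀ i) with hs
  have hsd : star ψ₀ ⬝ᵥ ψ₀ = (s : ℂ) := by
    rw [hs]
    push_cast
    exact Finset.sum_congr rfl fun i _ => by
      simp [Complex.normSq_eq_conj_mul_self]
  have hspos : 0 < s := by
    have hnn : ∀ i ∈ Finset.univ, 0 ≤ Complex.normSq (ψ₀ i) :=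
      fun i _ => Complex.normSq_nonneg _
    rcases (Finset.sum_nonneg hnn).lt_or_eq with h | h
    · exact h
    · exfalso
      apply hψ₀ne
      funext i
      have h0 : Complex.normSq (ψ₀ i) = 0 :=
        (Finset.sum_eq_zero_iff_of_nonneg hnn).mp h.symm i (Finset.mem_univ i)
      simpa [Complex.normSq_eq_zero] using h0
  set k : ℝ := (Real.sqrt s)⁻¹ with hk
  have hkpos : 0 < k := by
    rw [hk]
    exact inv_pos.mpr (Real.sqrt_pos.mpr hspos)
  set ψ : Fin n → ℂ := (k : ℂ) • ψ₀ with hψdef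
  have hψ1 : star ψ ⬝ᵥ ψ = 1 := by
    rw [hψdef, GappedAux.dot_smul_smul, hsd, Complex.conj_ofReal]
    rw [show ((k:ℂ) * (k:ℂ) * (s:ℂ)) = ((k * k * s : ℝ) : ℂ) by push_cast; ring]
    rw [hk]
    rw [show (Real.sqrt s)⁻¹ * (Real.sqrt s)⁻¹ * s
        = s / (Real.sqrt s * Real.sqrt s) by field_simp]
    rw [Real.mul_self_sqrt hspos.le, div_self hspos.ne']
    norm_num
  have hPψ : P₀ *ᵥ ψ = ψ := by
    rw [hψdef, Matrix.mulVec_smul, hPψ₀]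
  have hψev : H *ᵥ ψ = (E₀ : ℂ) • ψ := (hPrange ψ).mp hPψ
  have hkne : (k : ℂ) ≠ 0 := by
    simpa using hkpos.ne'
  have hPvec : ∀ x : Fin n → ℂ, P₀ *ᵥ x = (star ψ ⬝ᵥ x) • ψ := by
    intro x
    obtain ⟨cc, hcc⟩ := hspan₀ x
    have hx : P₀ *ᵥ x = (cc * (k:ℂ)⁻¹) • ψ := by
      rw [hψdef, hcc, smul_smul]
      congr 1
      field_simp
    have h1 : star ψ ⬝ᵥ (P₀ *ᵥ x) = star ψ ⬝ᵥ x := by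
      rw [Matrix.dotProduct_mulVec]
      congr 1
      have h := Matrix.star_mulVec P₀ ψ
      rw [hPψ, hPherm.eq] at h
      exact h.symm
    have h2 : star ψ ⬝ᵥ (P₀ *ᵥ x) = cc * (k:ℂ)⁻¹ := by
      rw [hx, dotProduct_smul, smul_eq_mul, hψ1, mul_one]
    rw [hx]
    congr 1
    rw [← h1, h2]
  have hspanH : ∀ v : Fin n → ℂ, H *ᵥ v = (E₀ : ℂ) • v → ∃ c : ℂ, v = c • ψ := by
    intro v hv
    have hp := (hPrange v).mpr hv
    exact ⟨star ψ ⬝ᵥ v, by rw [← hPvec v, hp]⟩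
  have hPent : ∀ i j, P₀ i j = ψ i * conj (ψ j) := by
    intro i j
    have h := congrFun (hPvec (Pi.single j 1)) i
    have l : (P₀ *ᵥ Pi.single j 1) i = P₀ i j := by
      simp [Matrix.mulVec, dotProduct_single]
    have r : ((star ψ ⬝ᵥ Pi.single j 1) • ψ) i = ψ i * conj (ψ j) := by
      simp only [dotProduct_single, Pi.smul_apply, Pi.star_apply, smul_eq_mul,
        RCLike.star_def, mul_one]
      ring
    rw [l, r] at h
    exact h
  have htr : ∀ B : Matrix (Fin n) (Fin n) ℂ, (P₀ * B).trace = star ψ ⬝ᵥ (B *ᵥ ψ) := by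
    intro B
    simp only [Matrix.trace, Matrix.diag_apply, Matrix.mul_apply, Matrix.mulVec,
      dotProduct, Pi.star_apply]
    rw [Finset.sum_comm]
    refine Finset.sum_congr rfl fun j _ => ?_
    rw [Finset.mul_sum]
    refine Finset.sum_congr rfl fun i _ => ?_
    rw [hPent i j]
    simp only [RCLike.star_def]
    ring
  have hAdj : ∀ w : Fin n → ℂ, star ψ ⬝ᵥ (Aᴴ *ᵥ w) = star (A *ᵥ ψ) ⬝ᵥ w := by
    intro w
    rw [Matrix.dotProduct_mulVec, ← Matrix.star_mulVec]
  have h1 : (P₀ * (Aᴴ * A)).trace = star (A *ᵥ ψ) ⬝ᵥ (A *ᵥ ψ) := by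
    rw [htr, ← Matrix.mulVec_mulVec, hAdj]
  have h2 : (P₀ * A).trace = star ψ ⬝ᵥ (A *ᵥ ψ) := htr A
  have h3 : (P₀ * (Aᴴ * (H * A - A * H))).trace
      = star (A *ᵥ ψ) ⬝ᵥ (H *ᵥ (A *ᵥ ψ)) - (E₀ : ℂ) * (star (A *ᵥ ψ) ⬝ᵥ (A *ᵥ ψ)) := by
    rw [htr, ← Matrix.mulVec_mulVec, hAdj]
    have hv : (H * A - A * H) *ᵥ ψ = H *ᵥ (A *ᵥ ψ) - (E₀ : ℂ) • (A *ᵥ ψ) := by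
      rw [Matrix.sub_mulVec]
      congr 1
      · exact (Matrix.mulVec_mulVec ψ H A).symm
      · rw [← Matrix.mulVec_mulVec, hψev, Matrix.mulVec_smul]
    rw [hv, dotProduct_sub, dotProduct_smul, smul_eq_mul]
  rw [h1, h2, h3]
  have hre : ((star (A *ᵥ ψ) ⬝ᵥ (H *ᵥ (A *ᵥ ψ)))
        - (E₀ : ℂ) * (star (A *ᵥ ψ) ⬝ᵥ (A *ᵥ ψ))).re
      = (star (A *ᵥ ψ) ⬝ᵥ (H *ᵥ (A *ᵥ ψ))).re - E₀ * (star (A *ᵥ ψ) ⬝ᵥ (A *ᵥ ψ)).re := by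
    simp [Complex.sub_re, Complex.re_ofReal_mul]
  rw [hre]
  exact GappedAux.spectral_ineq H hH E₀ E₁ ψ hψ1 hspanH hE0min hlt (A *ᵥ ψ)
end

section
/- In the setting of a Banach algebra with norm-one projections (E_k)_{k∈ℕ} onto increasing subalgebras with E_k E_l = E_{min(k,l)}, and decay norms ‖A‖_ν := ‖A‖ + sup_k (1+k)^ν ‖A − E_k A‖: if ν ≥ 1 and ‖A‖_ν < ∞, then lim_{k→∞} ‖A − E_k A‖_{ν−1} = 0. -/
/-- If `‖A‖_ν < ∞` with `ν ≥ 1`, then `‖A − E_k A‖_{ν−1} → 0` as `k → ∞`, in the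
abstract decay-norm framework with norm-one projections `E_k` satisfying
`E_k ∘ E_l = E_{min(k,l)}`. -/
theorem stmt5 {V : Type*} [NormedAddCommGroup V] [NormedSpace ℝ V]
    (E : ℕ → V →ₗ[ℝ] V)
    (hcontr : ∀ k (a : V), ‖E k a‖ ≤ ‖a‖)
    (hcomp : ∀ k l, (E k).comp (E l) = E (min k l))
    (ν : ℕ) (hν : 1 ≤ ν) (a : V)
    (ha : BddAbove (Set.range fun k : ℕ => ‖a - E k a‖ * (1 + (k : ℝ)) ^ ν)) :
    Filter.Tendsto
      (fun k : ℕ => ‖a - E k a‖ +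
        ⨆ l : ℕ, ‖(a - E k a) - E l (a - E k a)‖ * (1 + (l : ℝ)) ^ (ν - 1))
      Filter.atTop (nhds 0) := by
  obtain ⟨C, hC⟩ := ha
  have hCb : ∀ k : ℕ, ‖a - E k a‖ * (1 + (k : ℝ)) ^ ν ≤ C := by
    intro k
    exact hC ⟨k, rfl⟩
  have hC0 : 0 ≤ C := by
    have h := hCb 0
    have h0 : (0:ℝ) ≤ ‖a - E 0 a‖ * (1 + ((0:ℕ) : ℝ)) ^ ν := by positivity
    linarith
  have hEE : ∀ k l (x : V), E l (E k x) = E (min l k) x := by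
    intro k l x
    have := congrArg (fun f : V →ₗ[ℝ] V => f x) (hcomp l k)
    simpa using this
  have hpos : ∀ k : ℕ, (0:ℝ) < 1 + k := by
    intro k
    positivity
  -- pointwise bound on the norm part
  have hnorm : ∀ k : ℕ, ‖a - E k a‖ ≤ C / (1 + (k : ℝ)) := by
    intro k
    rw [le_div_iff₀ (hpos k)]
    calc ‖a - E k a‖ * (1 + (k:ℝ)) ≤ ‖a - E k a‖ * (1 + (k:ℝ)) ^ ν := by
          gcongr
          exact le_self_pow₀ (by linarith [hpos k]) (by omega)
      _ ≤ C := hCb k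
  -- bound on each term of the sup
  have hterm : ∀ k l : ℕ, ‖(a - E k a) - E l (a - E k a)‖ * (1 + (l : ℝ)) ^ (ν - 1)
      ≤ C / (1 + (k : ℝ)) := by
    intro k l
    rcases le_or_gt k l with hkl | hkl
    · have heq : (a - E k a) - E l (a - E k a) = a - E l a := by
        have : E l (a - E k a) = E l a - E k a := by
          rw [map_sub, hEE k l a, min_eq_right hkl]
        rw [this]; abel
      rw [heq]
      have h1 := hCb l
      have hpow : (1 + (l:ℝ)) ^ ν = (1 + (l:ℝ)) ^ (ν - 1) * (1 + (l:ℝ)) := by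
        rw [← pow_succ]; congr 1; omega
      rw [hpow] at h1
      rw [le_div_iff₀ (hpos k)]
      have h2 : ‖a - E l a‖ * (1 + (l:ℝ)) ^ (ν-1) * (1 + (k:ℝ))
          ≤ ‖a - E l a‖ * ((1 + (l:ℝ)) ^ (ν-1) * (1 + (l:ℝ))) := by
        rw [← mul_assoc]
        gcongr
      linarith [h1, h2]
    · have heq : (a - E k a) - E l (a - E k a) = a - E k a := by
        have : E l (a - E k a) = 0 := by
          rw [map_sub, hEE k l a, min_eq_left hkl.le, sub_self]
        rw [this]; abel
      rw [heq]
      have h1 := hCb k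
      have hpow : (1 + (k:ℝ)) ^ ν = (1 + (k:ℝ)) ^ (ν - 1) * (1 + (k:ℝ)) := by
        rw [← pow_succ]; congr 1; omega
      rw [hpow] at h1
      rw [le_div_iff₀ (hpos k)]
      have h2 : ‖a - E k a‖ * (1 + (l:ℝ)) ^ (ν-1) * (1 + (k:ℝ))
          ≤ ‖a - E k a‖ * ((1 + (k:ℝ)) ^ (ν-1) * (1 + (k:ℝ))) := by
        rw [← mul_assoc]
        gcongr
      linarith [h1, h2]
  have hsup : ∀ k : ℕ,
      (⨆ l : ℕ, ‖(a - E k a) - E l (a - E k a)‖ * (1 + (l : ℝ)) ^ (ν - 1))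
        ≤ C / (1 + (k : ℝ)) := by
    intro k
    exact ciSup_le (hterm k)
  have hf0 : ∀ k : ℕ, 0 ≤ ‖a - E k a‖ +
      ⨆ l : ℕ, ‖(a - E k a) - E l (a - E k a)‖ * (1 + (l : ℝ)) ^ (ν - 1) := by
    intro k
    have : 0 ≤ ⨆ l : ℕ, ‖(a - E k a) - E l (a - E k a)‖ * (1 + (l : ℝ)) ^ (ν - 1) :=
      Real.iSup_nonneg fun l => by positivity
    positivity
  have hub : ∀ k : ℕ, ‖a - E k a‖ +
      (⨆ l : ℕ, ‖(a - E k a) - E l (a - E k a)‖ * (1 + (l : ℝ)) ^ (ν - 1))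
        ≤ 2 * (C / (1 + (k : ℝ))) := by
    intro k
    have := hnorm k
    have := hsup k
    linarith
  have hlim : Filter.Tendsto (fun k : ℕ => 2 * (C / (1 + (k : ℝ))))
      Filter.atTop (nhds 0) := by
    have h1 : Filter.Tendsto (fun k : ℕ => (1 + (k : ℝ))) Filter.atTop Filter.atTop :=
      Filter.tendsto_atTop_add_const_left _ 1 tendsto_natCast_atTop_atTop
    have h2 : Filter.Tendsto (fun k : ℕ => C / (1 + (k : ℝ))) Filter.atTop (nhds 0) :=
      Filter.Tendsto.div_atTop tendsto_const_nhds h1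
    simpa using h2.const_mul 2
  exact squeeze_zero hf0 hub hlim
end

section
/- Let (c_k)_{k∈ℕ} be a sequence of nonnegative reals. Then there exists a strictly positive, monotonically decreasing sequence (δ_k)_{k∈ℕ} with δ_k ≤ 2^{−k}, and for every n ∈ ℕ a constant C_n > 0, such that for all k, n ∈ ℕ and all ε with δ_{k+1} < |ε| ≤ δ_k one has c_k · |ε|^{k+1} ≤ C_n · |ε|^n. -/
/-- Resummation lemma behind the `O(ε^∞)` construction of the NEASS: given
nonnegative constants `c_k`, there is a strictly positive decreasing sequence
`δ_k ≤ 2^{−k}` and, for every `n`, a constant `C_n > 0`, such that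
`c_k |ε|^{k+1} ≤ C_n |ε|^n` whenever `δ_{k+1} < |ε| ≤ δ_k`. -/
theorem stmt12 (c : ℕ → ℝ) (hc : ∀ k, 0 ≤ c k) :
    ∃ δ : ℕ → ℝ, (∀ k, 0 < δ k) ∧ (∀ k, δ (k + 1) ≤ δ k) ∧
      (∀ k, δ k ≤ (1 / 2 : ℝ) ^ k) ∧
      ∀ n : ℕ, ∃ C : ℝ, 0 < C ∧
        ∀ (k : ℕ) (ε : ℝ), δ (k + 1) < |ε| → |ε| ≤ δ k →
          c k * |ε| ^ (k + 1) ≤ C * |ε| ^ n := by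
  set S : ℕ → ℝ := fun k => ∑ j ∈ Finset.range (k + 1), c j with hSdef
  have hS0 : ∀ k, 0 ≤ S k := fun k => Finset.sum_nonneg fun j _ => hc j
  have hSmono : ∀ k, S k ≤ S (k + 1) := by
    intro k
    apply Finset.sum_le_sum_of_subset_of_nonneg
    · exact Finset.range_subset_range.2 (by omega)
    · exact fun j _ _ => hc j
  have hcS : ∀ k, c k ≤ S k := by
    intro k
    exact Finset.single_le_sum (fun j _ => hc j) (Finset.self_mem_range_succ k)
  set δ : ℕ → ℝ := fun k => min ((1 / 2 : ℝ) ^ k) (1 / (1 + S k)) with hδdef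
  have hδpos : ∀ k, 0 < δ k := by
    intro k
    apply lt_min (pow_pos (by norm_num) _)
    have := hS0 k
    positivity
  have hδle1 : ∀ k, δ k ≤ 1 := by
    intro k
    refine le_trans (min_le_left _ _) ?_
    exact pow_le_one₀ (by norm_num) (by norm_num)
  have hδinv : ∀ k, δ k ≤ 1 / (1 + S k) := fun k => min_le_right _ _
  refine ⟨δ, hδpos, ?_, fun k => min_le_left _ _, ?_⟩
  · intro k
    apply min_le_min
    · exact pow_le_pow_of_le_one (by norm_num) (by norm_num) (Nat.le_succ k)
    · apply one_div_le_one_div_of_le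
      · linarith [hS0 k]
      · linarith [hSmono k]
  · intro n
    refine ⟨1 + ∑ k ∈ Finset.range n, c k / (δ (k + 1)) ^ n, ?_, ?_⟩
    · have : 0 ≤ ∑ k ∈ Finset.range n, c k / (δ (k + 1)) ^ n := by
        apply Finset.sum_nonneg
        intro k _
        exact div_nonneg (hc k) (pow_nonneg (hδpos (k + 1)).le n)
      linarith
    · intro k ε h1 h2
      have hεpos : 0 < |ε| := lt_trans (hδpos (k + 1)) h1
      have hεle1 : |ε| ≤ 1 := le_trans h2 (hδle1 k)
      set C := 1 + ∑ j ∈ Finset.range n, c j / (δ (j + 1)) ^ n with hCdef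
      rcases lt_or_ge k n with hkn | hkn
      · -- k < n : use the term c k / δ(k+1)^n in the sum
        have hterm : c k / (δ (k + 1)) ^ n ≤ C - 1 := by
          rw [hCdef]
          simp only [add_sub_cancel_left]
          apply Finset.single_le_sum (f := fun j => c j / (δ (j + 1)) ^ n)
            (fun j _ => div_nonneg (hc j) (pow_nonneg (hδpos (j + 1)).le n))
            (Finset.mem_range.2 hkn)
        have hδn : (δ (k + 1)) ^ n ≤ |ε| ^ n :=
          pow_le_pow_left₀ (hδpos (k + 1)).le h1.le n
        have h3 : c k * |ε| ^ (k + 1) ≤ c k :=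
          mul_le_of_le_one_right (hc k) (pow_le_one₀ hεpos.le hεle1)
        have h4 : c k ≤ (C - 1) * (δ (k + 1)) ^ n := by
          have hδnpos : 0 < (δ (k + 1)) ^ n := pow_pos (hδpos (k + 1)) n
          calc c k = c k / (δ (k + 1)) ^ n * (δ (k + 1)) ^ n := by
                field_simp
            _ ≤ (C - 1) * (δ (k + 1)) ^ n := by
                apply mul_le_mul_of_nonneg_right hterm hδnpos.le
        have h5 : (C - 1) * (δ (k + 1)) ^ n ≤ C * |ε| ^ n := by
          have hC1 : 0 ≤ C - 1 := by
            have h0 : 0 ≤ ∑ j ∈ Finset.range n, c j / (δ (j + 1)) ^ n :=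
              Finset.sum_nonneg fun j _ =>
                div_nonneg (hc j) (pow_nonneg (hδpos (j + 1)).le n)
            rw [hCdef]; linarith
          calc (C - 1) * (δ (k + 1)) ^ n ≤ (C - 1) * |ε| ^ n :=
                mul_le_mul_of_nonneg_left hδn hC1
            _ ≤ C * |ε| ^ n := by
                apply mul_le_mul_of_nonneg_right (by linarith) (pow_nonneg hεpos.le n)
        linarith
      · -- n ≤ k : |ε|^{k+1} = |ε|^{k+1-n} * |ε|^n and c k * δ k ≤ 1
        have hC1 : 1 ≤ C := by
          have : 0 ≤ ∑ j ∈ Finset.range n, c j / (δ (j + 1)) ^ n :=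
            Finset.sum_nonneg fun j _ =>
              div_nonneg (hc j) (pow_nonneg (hδpos (j + 1)).le n)
          rw [hCdef]; linarith
        have hsplit : |ε| ^ (k + 1) = |ε| ^ (k + 1 - n) * |ε| ^ n := by
          rw [← pow_add]
          congr 1
          omega
        have hδk : |ε| ^ (k + 1 - n) ≤ δ k := by
          calc |ε| ^ (k + 1 - n) ≤ |ε| ^ 1 :=
                pow_le_pow_of_le_one hεpos.le hεle1 (by omega)
            _ = |ε| := pow_one _
            _ ≤ δ k := h2
        have hckδ : c k * δ k ≤ 1 := by
          have h6 : δ k ≤ 1 / (1 + S k) := hδinv k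
          have h7 : 1 + S k > 0 := by linarith [hS0 k]
          have h8 : c k * δ k ≤ c k * (1 / (1 + S k)) :=
            mul_le_mul_of_nonneg_left h6 (hc k)
          have h9 : c k * (1 / (1 + S k)) ≤ 1 := by
            rw [mul_one_div, div_le_one h7]
            linarith [hcS k]
          linarith
        calc c k * |ε| ^ (k + 1) = c k * |ε| ^ (k + 1 - n) * |ε| ^ n := by
              rw [hsplit, mul_assoc]
          _ ≤ 1 * |ε| ^ n := by
              apply mul_le_mul_of_nonneg_right _ (pow_nonneg hεpos.le n)
              calc c k * |ε| ^ (k + 1 - n) ≤ c k * δ k :=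
                    mul_le_mul_of_nonneg_left hδk (hc k)
                _ ≤ 1 := hckδ
          _ ≤ C * |ε| ^ n :=
              mul_le_mul_of_nonneg_right hC1 (pow_nonneg hεpos.le n)
end
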